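/- Triangle-inequality bound for approximate pivots: suppose w ∈ A_i, w ∉ B_i(v), i.e. d(v, A_{i+1}) ≤ d(v,w). Then d(v, p_{i+1}(v)) ≤ d(v,w) ≤ d(v,u) + d(u,w) for any u. In particular, in the Thorup-Zwick query induction, if at step i we have d(u, w_i) ≤ i·d(u,v) with w_i = p_i(u), and w_i ∉ B(v), then d(v, p_{i+1}(v)) ≤ (i+1)·d(u,v). -/

import Mathlib

open ENNReal
open scoped Classical

/-- The distance from `u` to a set `S` (`⊤` if `S` is empty). -/
noncomputable def distToSet {V : Type*} (d : V → V → ℝ≥0∞) (S : Set V) (u : V) : ℝ≥0∞ :=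
  ⨅ x ∈ S, d u x

/-- The level-`i` bunch of `u`: `B_i(u) = { x ∈ A_i : d(u,x) < d(u, A_{i+1}) }`. -/
def bunchLevel {V : Type*} (d : V → V → ℝ≥0∞) (A : ℕ → Set V) (i : ℕ) (u : V) : Set V :=
  {x ∈ A i | d u x < distToSet d (A (i + 1)) u}

/-- The bunch of `u`: `B(u) = ∪_{i=0}^{k-1} B_i(u)`. -/
def bunch {V : Type*} (d : V → V → ℝ≥0∞) (A : ℕ → Set V) (k : ℕ) (u : V) : Set V :=
  ⋃ i ∈ Finset.range k, bunchLevel d A i u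

/-- Triangle-inequality bound for approximate pivots: if `w ∈ A_i` but `w ∉ B_i(v)`
then `d(v, p_{i+1}(v)) ≤ d(v,w) ≤ d(v,u) + d(u,w)`; in particular, in the
Thorup-Zwick query induction, if `d(u, p_i(u)) ≤ i·d(u,v)` and `p_i(u) ∉ B(v)` then
`d(v, p_{i+1}(v)) ≤ (i+1)·d(u,v)`. -/
theorem stmt13 {V : Type*} [Fintype V] (d : V → V → ℝ≥0∞) (k : ℕ) (hk : 1 ≤ k)
    (A : ℕ → Set V) (p : ℕ → V → V)
    (hfin : ∀ x y : V, d x y ≠ ⊤)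
    (hself : ∀ x : V, d x x = 0)
    (hdsymm : ∀ x y : V, d x y = d y x)
    (htri : ∀ x y z : V, d x z ≤ d x y + d y z)
    (hchain : ∀ i, A (i + 1) ⊆ A i)
    (hpmem : ∀ i, i ≤ k - 1 → ∀ u, p i u ∈ A i)
    (hpdist : ∀ i, i ≤ k - 1 → ∀ u, d u (p i u) = distToSet d (A i) u)
    (u v : V) (i : ℕ) (hi : i + 1 ≤ k - 1) :
    (∀ w : V, w ∈ A i → w ∉ bunchLevel d A i v →
      d v (p (i + 1) v) ≤ d v w ∧ d v w ≤ d v u + d u w) ∧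
    (d u (p i u) ≤ (i : ℝ≥0∞) * d u v → p i u ∉ bunch d A k v →
      d v (p (i + 1) v) ≤ ((i : ℝ≥0∞) + 1) * d u v) := by
  have key : ∀ w : V, w ∈ A i → w ∉ bunchLevel d A i v →
      d v (p (i + 1) v) ≤ d v w ∧ d v w ≤ d v u + d u w := by
    intro w hw hwb
    have hnlt : ¬ d v w < distToSet d (A (i + 1)) v := fun h => hwb ⟨hw, h⟩
    have h1 : d v (p (i + 1) v) ≤ d v w := by
      rw [hpdist (i + 1) hi v]
      exact not_lt.mp hnlt
    exact ⟨h1, htri v u w⟩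
  refine ⟨key, ?_⟩
  intro hind hnb
  have hik : i ≤ k - 1 := le_trans (Nat.le_succ i) hi
  have hiklt : i < k := by omega
  have hmem : p i u ∈ A i := hpmem i hik u
  have hnbl : p i u ∉ bunchLevel d A i v := by
    intro h
    exact hnb (Set.mem_biUnion (Finset.mem_range.mpr hiklt) h)
  obtain ⟨h1, h2⟩ := key (p i u) hmem hnbl
  calc d v (p (i + 1) v) ≤ d v u + d u (p i u) := le_trans h1 h2
    _ ≤ d u v + (i : ℝ≥0∞) * d u v := by rw [hdsymm v u]; exact add_le_add le_rfl hind
    _ = ((i : ℝ≥0∞) + 1) * d u v := by ring
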